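/- Let p be prime, h ≥ 1, q = p^h, and K a nonarchimedean valued field with |p| = p^{−1}. For t, x ∈ K with |x − t| ≤ |t|, one has |x^q − t^q| ≤ max(|x − t|^q, p^{−1}·|x − t|·|t|^{q−1}). -/

import Mathlib

/-- For `q = p^h` (`p` prime, `h ≥ 1`) and `|p| = p^{−1}`, if `|x − t| ≤ |t|` then
`|x^q − t^q| ≤ max (|x − t|^q) (p^{−1}·|x − t|·|t|^{q−1})`. -/
theorem abv_pow_sub_pow_le {K : Type*} [Field K]
    (abv : AbsoluteValue K ℝ) (hna : IsNonarchimedean (abv : K → ℝ))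
    (p : ℕ) (hp : p.Prime) (hvp : abv (p : K) = ((p : ℝ))⁻¹)
    (h : ℕ) (hh : 1 ≤ h)
    (t x : K) (hxt : abv (x - t) ≤ abv t) :
    abv (x ^ (p ^ h) - t ^ (p ^ h)) ≤
      max (abv (x - t) ^ (p ^ h))
        (((p : ℝ))⁻¹ * abv (x - t) * abv t ^ (p ^ h - 1)) := by
  set q := p ^ h with hq
  have hq1 : 1 ≤ q := Nat.one_le_pow _ _ hp.pos
  have herase : (Finset.range (q + 1)).erase 0 = Finset.Ioc 0 q := by
    ext i; simp [Finset.mem_erase, Finset.mem_range, Finset.mem_Ioc]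
  -- expansion
  have key : x ^ q - t ^ q =
      ∑ i ∈ Finset.Ioc 0 q, (x - t) ^ i * t ^ (q - i) * (q.choose i : K) := by
    have hx : ((x - t) + t) ^ q =
        ∑ i ∈ Finset.range (q + 1), (x - t) ^ i * t ^ (q - i) * (q.choose i : K) := add_pow _ _ _
    have h0 : (0 : ℕ) ∈ Finset.range (q + 1) := by simp
    rw [← Finset.add_sum_erase _ _ h0, herase] at hx
    simp only [pow_zero, Nat.sub_zero, Nat.choose_zero_right, Nat.cast_one, one_mul, mul_one]
      at hx
    have : x = (x - t) + t := by ring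
    conv_lhs => rw [this, hx]
    exact add_sub_cancel_left (t ^ q) _
  rw [key]
  obtain ⟨b, hb, hble⟩ := hna.finset_image_add (map_zero abv) (apply_nonneg abv)
    (fun (i : ℕ) => (x - t) ^ i * t ^ (q - i) * (q.choose i : K)) (Finset.Ioc 0 q)
  have hbmem := hb ⟨1, by simp [Finset.mem_Ioc]; omega⟩
  rw [Finset.mem_Ioc] at hbmem
  refine hble.trans ?_
  rcases eq_or_lt_of_le hbmem.2 with rfl | hblt
  · -- b = q : term is (x-t)^q
    simp only [Nat.sub_self, pow_zero, Nat.choose_self, Nat.cast_one, mul_one]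
    rw [map_pow]
    exact le_max_left _ _
  · -- 0 < b < q
    refine le_trans ?_ (le_max_right _ _)
    have hdvd : p ∣ q.choose b := hp.dvd_choose_pow (by omega) (by omega)
    obtain ⟨m, hm⟩ := hdvd
    have hm1 : abv ((m : K)) ≤ 1 := by
      have := IsNonarchimedean.nmul_le (f := abv) hna (n := m) (a := (1 : K))
      simpa using this
    have habc : abv ((q.choose b : K)) ≤ ((p : ℝ))⁻¹ := by
      rw [hm, Nat.cast_mul, map_mul, hvp]
      calc ((p : ℝ))⁻¹ * abv ((m : K)) ≤ ((p : ℝ))⁻¹ * 1 := by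
            apply mul_le_mul_of_nonneg_left hm1
            positivity
        _ = ((p : ℝ))⁻¹ := mul_one _
    have hterm : abv ((x - t) ^ b * t ^ (q - b)) ≤ abv (x - t) * abv t ^ (q - 1) := by
      rw [map_mul, map_pow, map_pow]
      have h1 : abv (x - t) ^ b ≤ abv (x - t) * abv t ^ (b - 1) := by
        calc abv (x - t) ^ b = abv (x - t) * abv (x - t) ^ (b - 1) := by
              rw [← pow_succ']; congr 1; omega
          _ ≤ abv (x - t) * abv t ^ (b - 1) := by
              apply mul_le_mul_of_nonneg_left (pow_le_pow_left₀ (abv.nonneg _) hxt _)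
                (abv.nonneg _)
      calc abv (x - t) ^ b * abv t ^ (q - b)
          ≤ (abv (x - t) * abv t ^ (b - 1)) * abv t ^ (q - b) := by
            apply mul_le_mul_of_nonneg_right h1 (by positivity)
        _ = abv (x - t) * abv t ^ (q - 1) := by
            rw [mul_assoc, ← pow_add]; congr 2; omega
    calc abv ((x - t) ^ b * t ^ (q - b) * (q.choose b : K))
        = abv ((x - t) ^ b * t ^ (q - b)) * abv ((q.choose b : K)) := map_mul _ _ _
      _ ≤ (abv (x - t) * abv t ^ (q - 1)) * ((p : ℝ))⁻¹ := by
          apply mul_le_mul hterm habc (abv.nonneg _) (by positivity)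
      _ = ((p : ℝ))⁻¹ * abv (x - t) * abv t ^ (q - 1) := by ring
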